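/- For ε > 0, let β(ε) denote the unique β > e^{−1} with 1 − β − (1/(2e))·(log β)² = 1 − 3/(2e) − ε, and set z(β) = e·β + log β. Then z(β(ε)) ∼ 2·e^{1/2}·ε^{1/2} as ε → 0+, i.e. z(β(ε))/(2·e^{1/2}·ε^{1/2}) → 1. -/

import Mathlib

open Real Filter Set Topology

noncomputable def ksF (β : ℝ) : ℝ :=
  β + (Real.log β) ^ 2 / (2 * Real.exp 1) - 3 / (2 * Real.exp 1)

lemma ks_a_pos : (0:ℝ) < (Real.exp 1)⁻¹ := by positivity

lemma ks_z_pos {β : ℝ} (h : (Real.exp 1)⁻¹ < β) : 0 < Real.exp 1 * β + Real.log β := by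
  have h1 : (1:ℝ) < Real.exp 1 * β := by
    have := mul_lt_mul_of_pos_left h (Real.exp_pos 1)
    rwa [mul_inv_cancel₀ (Real.exp_ne_zero 1)] at this
  have h2 : (-1:ℝ) < Real.log β := by
    have := Real.log_lt_log ks_a_pos h
    rwa [Real.log_inv, Real.log_exp] at this
  linarith

lemma ksF_hasDerivAt {x : ℝ} (hx : 0 < x) :
    HasDerivAt ksF (1 + Real.log x / (Real.exp 1 * x)) x := by
  have h1 : HasDerivAt (fun β : ℝ => (Real.log β) ^ 2) (2 * Real.log x * x⁻¹) x := by
    have := (Real.hasDerivAt_log hx.ne').pow 2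
    refine this.congr_deriv ?_
    norm_num
  have h2 : HasDerivAt ksF (1 + (2 * Real.log x * x⁻¹) / (2 * Real.exp 1)) x :=
    ((hasDerivAt_id x).add (h1.div_const _)).sub_const _
  convert h2 using 1
  have he := Real.exp_ne_zero 1
  field_simp

lemma ksF_a : ksF (Real.exp 1)⁻¹ = 0 := by
  unfold ksF
  rw [Real.log_inv, Real.log_exp]
  have he := Real.exp_ne_zero 1
  field_simp
  ring

lemma ksF_strictMono : StrictMonoOn ksF (Ici (Real.exp 1)⁻¹) := by
  apply strictMonoOn_of_deriv_pos (convex_Ici _)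
  · intro x hx
    have hx0 : 0 < x := lt_of_lt_of_le ks_a_pos hx
    exact (ksF_hasDerivAt hx0).continuousAt.continuousWithinAt
  · intro x hx
    rw [interior_Ici] at hx
    have hx0 : 0 < x := lt_trans ks_a_pos hx
    rw [(ksF_hasDerivAt hx0).deriv]
    have hz := ks_z_pos hx
    have heq : 1 + Real.log x / (Real.exp 1 * x)
        = (Real.exp 1 * x + Real.log x) / (Real.exp 1 * x) := by
      field_simp
    rw [heq]
    exact div_pos hz (by positivity)

lemma ksF_pos {x : ℝ} (hx : (Real.exp 1)⁻¹ < x) : 0 < ksF x := by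
  have := ksF_strictMono self_mem_Ici (le_of_lt hx : (Real.exp 1)⁻¹ ≤ x) hx
  rwa [ksF_a] at this

lemma ks_sqrt_e : Real.sqrt (Real.exp 1) = Real.exp (1/2) := by
  rw [show Real.exp 1 = Real.exp (1/2) ^ 2 by
    rw [pow_two, ← Real.exp_add]; norm_num]
  exact Real.sqrt_sq (Real.exp_pos _).le

/-- The main ratio limit as `β → (e⁻¹)⁺`. -/
lemma ks_main_limit :
    Tendsto (fun x : ℝ =>
        (Real.exp 1 * x + Real.log x) / (2 * Real.exp (1/2) * Real.sqrt (ksF x)))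
      (𝓝[>] (Real.exp 1)⁻¹) (𝓝 1) := by
  set a : ℝ := (Real.exp 1)⁻¹ with ha
  have ha0 : 0 < a := ks_a_pos
  have ha1 : a < 1 := by
    rw [ha, inv_lt_one_iff₀]
    exact Or.inr (Real.one_lt_exp_iff.mpr (by norm_num))
  set N : ℝ → ℝ := fun x => (Real.exp 1 * x + Real.log x) ^ 2 with hN
  set D : ℝ → ℝ := fun x => 4 * Real.exp 1 * ksF x with hD
  set N' : ℝ → ℝ := fun x => 2 * (Real.exp 1 * x + Real.log x) * (Real.exp 1 + x⁻¹) with hN'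
  set D' : ℝ → ℝ := fun x => 4 * Real.exp 1 * (1 + Real.log x / (Real.exp 1 * x)) with hD'
  have hzd : ∀ x ∈ Ioo a 1, HasDerivAt (fun y : ℝ => Real.exp 1 * y + Real.log y)
      (Real.exp 1 + x⁻¹) x := by
    intro x hx
    have hx0 : 0 < x := lt_trans ha0 hx.1
    have := ((hasDerivAt_id x).const_mul (Real.exp 1)).add (Real.hasDerivAt_log hx0.ne')
    refine this.congr_deriv ?_
    ring
  have hNd : ∀ x ∈ Ioo a 1, HasDerivAt N (N' x) x := by
    intro x hx
    have := (hzd x hx).pow 2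
    refine this.congr_deriv ?_
    simp only [hN']; ring
  have hDd : ∀ x ∈ Ioo a 1, HasDerivAt D (D' x) x := by
    intro x hx
    have hx0 : 0 < x := lt_trans ha0 hx.1
    exact (ksF_hasDerivAt hx0).const_mul _
  have hD'pos : ∀ x ∈ Ioo a 1, 0 < D' x := by
    intro x hx
    have hx0 : 0 < x := lt_trans ha0 hx.1
    have hz := ks_z_pos hx.1
    have heq : D' x = 4 * (Real.exp 1 * x + Real.log x) / x := by
      rw [hD']
      field_simp
    rw [heq]
    positivity
  have hNa : Tendsto N (𝓝[>] a) (𝓝 0) := by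
    have hc : ContinuousAt N a := by
      apply ContinuousAt.pow
      exact (continuousAt_const.mul continuousAt_id).add (Real.continuousAt_log ha0.ne')
    have := hc.tendsto.mono_left (nhdsWithin_le_nhds (s := Ioi a))
    have hNa0 : N a = 0 := by
      simp [hN, ha, mul_inv_cancel₀ (Real.exp_ne_zero 1), Real.log_inv, Real.log_exp]
    rwa [hNa0] at this
  have hDa : Tendsto D (𝓝[>] a) (𝓝 0) := by
    have hc : ContinuousAt D a := by
      apply continuousAt_const.mul
      have h2 : ContinuousAt ksF a := (ksF_hasDerivAt ha0).continuousAt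
      exact h2
    have := hc.tendsto.mono_left (nhdsWithin_le_nhds (s := Ioi a))
    have hDa0 : D a = 0 := by simp [hD, ha, ksF_a]
    rwa [hDa0] at this
  have hdiv : Tendsto (fun x => N' x / D' x) (𝓝[>] a) (𝓝 1) := by
    have heq : ∀ᶠ x in 𝓝[>] a, (fun y => (Real.exp 1 * y + 1) / 2) x = N' x / D' x := by
      filter_upwards [Ioo_mem_nhdsGT_of_mem ⟨le_refl a, ha1⟩] with x hx
      have hx0 : 0 < x := lt_trans ha0 hx.1
      have hz := ks_z_pos hx.1
      rw [hN', hD']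
      field_simp
      ring
    have hcont : Tendsto (fun y : ℝ => (Real.exp 1 * y + 1) / 2) (𝓝[>] a) (𝓝 1) := by
      have hc : Tendsto (fun y : ℝ => (Real.exp 1 * y + 1) / 2) (𝓝 a)
          (𝓝 ((Real.exp 1 * a + 1) / 2)) :=
        (((continuous_const.mul continuous_id).add continuous_const).div_const 2).tendsto a
      have hval : (Real.exp 1 * a + 1) / 2 = 1 := by
        rw [ha, mul_inv_cancel₀ (Real.exp_ne_zero 1)]; norm_num
      rw [hval] at hc
      exact hc.mono_left nhdsWithin_le_nhds
    exact Tendsto.congr' heq hcont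
  have hL : Tendsto (fun x => N x / D x) (𝓝[>] a) (𝓝 1) :=
    HasDerivAt.lhopital_zero_right_on_Ioo ha1 hNd hDd
      (fun x hx => (hD'pos x hx).ne') hNa hDa hdiv
  have hsq : Tendsto (fun x => Real.sqrt (N x / D x)) (𝓝[>] a) (𝓝 1) := by
    have := hL.sqrt
    rwa [Real.sqrt_one] at this
  apply Tendsto.congr' _ hsq
  filter_upwards [self_mem_nhdsWithin] with x hx
  have hx' : a < x := hx
  have hz := ks_z_pos hx'
  have hF := ksF_pos hx'
  have hDsqrt : Real.sqrt (4 * Real.exp 1 * ksF x)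
      = 2 * Real.exp (1/2) * Real.sqrt (ksF x) := by
    have hE : Real.exp (1/2) * Real.exp (1/2) = Real.exp 1 := by
      rw [← Real.exp_add]; norm_num
    rw [show (4:ℝ) * Real.exp 1 = (2 * Real.exp (1/2)) ^ 2 by rw [← hE]; ring]
    rw [Real.sqrt_mul (by positivity), Real.sqrt_sq (by positivity)]
  simp only [hN, hD]
  rw [Real.sqrt_div (by positivity), Real.sqrt_sq hz.le, hDsqrt]

/-- For `ε > 0` let `B ε` be the unique `β > e⁻¹` with
`1 - β - (1/(2e)) (log β)² = 1 - 3/(2e) - ε`, and set `z β = e β + log β`. Then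
`z (B ε) ∼ 2 e^{1/2} ε^{1/2}` as `ε → 0⁺`. -/
theorem karpSipser_z_asymptotic_at_extinction (B : ℝ → ℝ)
    (hB : ∀ ε : ℝ, 0 < ε →
      (Real.exp 1)⁻¹ < B ε ∧
        1 - B ε - 1 / (2 * Real.exp 1) * (Real.log (B ε)) ^ 2
          = 1 - 3 / (2 * Real.exp 1) - ε) :
    Filter.Tendsto
      (fun ε : ℝ =>
        (Real.exp 1 * B ε + Real.log (B ε)) / (2 * Real.exp (1 / 2) * Real.sqrt ε))
      (𝓝[>] (0 : ℝ)) (𝓝 1) := by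
  have hkey : ∀ ε : ℝ, 0 < ε → ksF (B ε) = ε := by
    intro ε hε
    have h2 := (hB ε hε).2
    have h3 : (Real.log (B ε)) ^ 2 / (2 * Real.exp 1)
        = 1 / (2 * Real.exp 1) * (Real.log (B ε)) ^ 2 := by ring
    unfold ksF
    rw [h3]
    linarith
  have hBmem : ∀ᶠ ε in 𝓝[>] (0:ℝ), B ε ∈ Ioi (Real.exp 1)⁻¹ := by
    filter_upwards [self_mem_nhdsWithin] with ε hε
    exact (hB ε hε).1
  have hBlim : Tendsto B (𝓝[>] (0:ℝ)) (𝓝 (Real.exp 1)⁻¹) := by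
    rw [Metric.tendsto_nhds]
    intro δ hδ
    have hmemδ : (Real.exp 1)⁻¹ + δ ∈ Ici (Real.exp 1)⁻¹ := by
      simp [le_of_lt hδ]
    have hpos : 0 < ksF ((Real.exp 1)⁻¹ + δ) := ksF_pos (by linarith)
    filter_upwards [Ioo_mem_nhdsGT_of_mem ⟨le_refl 0, hpos⟩, hBmem] with ε hε hmem
    have hfB : ksF (B ε) = ε := hkey ε hε.1
    have hlt : B ε < (Real.exp 1)⁻¹ + δ := by
      have := (ksF_strictMono.lt_iff_lt (Set.mem_Ici.mpr (le_of_lt hmem)) hmemδ).mp (by rw [hfB]; exact hε.2)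
      exact this
    have hgt : (Real.exp 1)⁻¹ < B ε := hmem
    rw [Real.dist_eq, abs_lt]
    constructor <;> linarith
  have hBt : Tendsto B (𝓝[>] (0:ℝ)) (𝓝[>] (Real.exp 1)⁻¹) :=
    tendsto_nhdsWithin_iff.mpr ⟨hBlim, hBmem⟩
  have hcomp := ks_main_limit.comp hBt
  apply Tendsto.congr' _ hcomp
  filter_upwards [self_mem_nhdsWithin] with ε hε
  simp only [Function.comp]
  rw [hkey ε hε]
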